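/- Let X = T(θ_n,S_n)_{n∈ℕ} be a regular mixed Tsirelson space with norm ‖·‖. Then for every j ≥ 1, δ_j(X) = θ_j; that is, δ_j computed for the unit vector basis (e_i) itself equals θ_j. -/

import Mathlib

open Filter

noncomputable section

/-- `c₀₀`: the finitely supported real sequences. -/
abbrev C00 : Type := ℕ →₀ ℝ

/-- The unit vector basis of `c₀₀`. -/
def eBasis (i : ℕ) : C00 := Finsupp.single i 1

/-- `f` is a norm on `c₀₀`. -/
def IsNorm (f : C00 → ℝ) : Prop :=
  (∀ v w : C00, f (v + w) ≤ f v + f w) ∧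
  (∀ (c : ℝ) (v : C00), f (c • v) = |c| * f v) ∧
  (∀ v : C00, v ≠ 0 → 0 < f v)

/-- `E < F` for finite sets of naturals: every element of `E` is smaller than
every element of `F` (vacuously true if one of them is empty). -/
def FinLt (E F : Finset ℕ) : Prop := ∀ a ∈ E, ∀ b ∈ F, a < b

/-- `min ran(v)` = the minimum of the support of `v`. -/
def minSupp (v : C00) : ℕ := sInf {j | v j ≠ 0}

/-- `max ran(v)` = the maximum of the support of `v`. -/
def maxSupp (v : C00) : ℕ := sSup {j | v j ≠ 0}

/-- `ran(v)`: the smallest integer interval containing the support of `v`. -/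
def ranSet (v : C00) : Set ℕ := Set.Icc (minSupp v) (maxSupp v)

/-- `E` is an interval of naturals. -/
def IsInterval (E : Finset ℕ) : Prop :=
  ∀ a ∈ E, ∀ b ∈ E, ∀ c : ℕ, a ≤ c → c ≤ b → c ∈ E

/-- The Schreier families `S_n`, `n ∈ ℕ`. -/
def SchreierFam : ℕ → Set (Finset ℕ)
  | 0 => {F : Finset ℕ | F.card ≤ 1}
  | (n + 1) => {F : Finset ℕ | ∃ (k : ℕ) (Fs : Fin k → Finset ℕ),
      (∀ i, Fs i ∈ SchreierFam n) ∧
      (∀ i j : Fin k, i < j → FinLt (Fs i) (Fs j)) ∧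
      (∀ i, ∀ a ∈ Fs i, k ≤ a) ∧
      F = Finset.univ.biUnion Fs}

/-- `S_ω = {F : n ≤ F and F ∈ S_n for some n}`. -/
def SchreierOmega : Set (Finset ℕ) :=
  {F : Finset ℕ | ∃ n : ℕ, (∀ a ∈ F, n ≤ a) ∧ F ∈ SchreierFam n}

/-- The restriction `Ex` of `x` to a finite set `E`. -/
def restr (E : Finset ℕ) (v : C00) : C00 := v.filter (fun j => j ∈ E)

/-- `(E_i)` is an admissible family of (nonempty, finite) sets for the family `S`:
`E_1 < E_2 < ⋯` and `{min E_i} ∈ S`. -/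
def AdmissibleSets (S : Set (Finset ℕ)) {m : ℕ} (E : Fin m → Finset ℕ) : Prop :=
  (∀ i, (E i).Nonempty) ∧
  (∀ i j : Fin m, i < j → FinLt (E i) (E j)) ∧
  (Finset.univ.image fun i => sInf ((E i : Set ℕ))) ∈ S

/-- `(E_i)` is an admissible family of (nonempty) intervals for the family `S`. -/
def AdmissibleIntervals (S : Set (Finset ℕ)) {m : ℕ} (E : Fin m → Finset ℕ) : Prop :=
  (∀ i, (E i).Nonempty ∧ IsInterval (E i)) ∧
  (∀ i j : Fin m, i < j → FinLt (E i) (E j)) ∧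
  (Finset.univ.image fun i => sInf ((E i : Set ℕ))) ∈ S

/-- `nrm` satisfies the implicit mixed Tsirelson norm equation with parameters `θ_q`
and families `Sq q` (`q ≥ 1`):
`‖x‖ = max(‖x‖_∞, sup{θ_q Σ ‖E_i x‖ : q ≥ 1, (E_i) q-admissible})`. -/
def MixedTsirelsonNormGen (θ : ℕ → ℝ) (Sq : ℕ → Set (Finset ℕ)) (nrm : C00 → ℝ) : Prop :=
  ∀ x : C00, nrm x =
    max (sSup {r : ℝ | ∃ j : ℕ, r = |x j|})
      (sSup {r : ℝ | ∃ (q m : ℕ) (E : Fin m → Finset ℕ), 1 ≤ q ∧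
        AdmissibleSets (Sq q) E ∧ r = θ q * ∑ i, nrm (restr (E i) x)})

/-- `nrm` is the norm of the mixed Tsirelson space `T(θ_n, S_n)_{n ∈ ℕ}`. -/
def MixedTsirelsonNorm (θ : ℕ → ℝ) (nrm : C00 → ℝ) : Prop :=
  MixedTsirelsonNormGen θ SchreierFam nrm

/-- `(θ_n)_{n ≥ 1}` is a regular sequence. -/
def RegularSeq (θ : ℕ → ℝ) : Prop :=
  (∀ n : ℕ, 1 ≤ n → 0 < θ n ∧ θ n < 1) ∧
  (∀ n : ℕ, 1 ≤ n → θ (n + 1) ≤ θ n) ∧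
  Tendsto θ atTop (nhds 0) ∧
  (∀ n m : ℕ, 1 ≤ n → 1 ≤ m → θ n * θ m ≤ θ (n + m))

/-- The `i`-th block `Σ_{j = m_i}^{m_{i+1} - 1} a_j x_j` of a block sequence of `(x_j)`
with coefficients `a` and breakpoints `m`. -/
def blk (x : ℕ → C00) (a : ℕ → ℝ) (m : ℕ → ℕ) (i : ℕ) : C00 :=
  ∑ j ∈ Finset.Ico (m i) (m (i + 1)), a j • x j

/-- The minimum of the range w.r.t. `(x_j)` of the `i`-th block: the least `j` in
`[m_i, m_{i+1})` with `a_j ≠ 0`. -/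
def minRangeIdx (a : ℕ → ℝ) (m : ℕ → ℕ) (i : ℕ) : ℕ :=
  sInf {j : ℕ | j ∈ Finset.Ico (m i) (m (i + 1)) ∧ a j ≠ 0}

/-- `(x_i)` is an (infinite) block sequence of `(e_i)`: nonzero and `x_1 < x_2 < ⋯`. -/
def IsBlockSeq (x : ℕ → C00) : Prop :=
  (∀ i, x i ≠ 0) ∧ ∀ i, FinLt (x i).support (x (i + 1)).support

/-- `(z_i)` is an (infinite) block sequence of `(x_i)`. -/
def IsBlockOf (x z : ℕ → C00) : Prop :=
  ∃ (a : ℕ → ℝ) (m : ℕ → ℕ), StrictMono m ∧ (∀ i, z i = blk x a m i) ∧ ∀ i, z i ≠ 0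

/-- The set of `δ ≥ 0` witnessing the `ℓ_1`-estimate for all finite block sequences of
`(x_i)` that are admissible (for the family `S`) *with respect to `(x_i)`*. -/
def deltaSetX (S : Set (Finset ℕ)) (nrm : C00 → ℝ) (x : ℕ → C00) : Set ℝ :=
  {δ : ℝ | 0 ≤ δ ∧ ∀ (n : ℕ) (a : ℕ → ℝ) (m : ℕ → ℕ), StrictMono m →
    (∀ i < n, blk x a m i ≠ 0) →
    (Finset.range n).image (fun i => minRangeIdx a m i) ∈ S →
    δ * ∑ i ∈ Finset.range n, nrm (blk x a m i) ≤
      nrm (∑ i ∈ Finset.range n, blk x a m i)}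

/-- The set of `δ ≥ 0` witnessing the `ℓ_1`-estimate for all finite block sequences of
`(x_i)` that are admissible (for the family `S`) *with respect to `(e_i)`*. -/
def deltaSetE (S : Set (Finset ℕ)) (nrm : C00 → ℝ) (x : ℕ → C00) : Set ℝ :=
  {δ : ℝ | 0 ≤ δ ∧ ∀ (n : ℕ) (a : ℕ → ℝ) (m : ℕ → ℕ), StrictMono m →
    (∀ i < n, blk x a m i ≠ 0) →
    (Finset.range n).image (fun i => minSupp (blk x a m i)) ∈ S →
    δ * ∑ i ∈ Finset.range n, nrm (blk x a m i) ≤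
      nrm (∑ i ∈ Finset.range n, blk x a m i)}

/-- `δ_α(x_i)` (α-admissibility w.r.t. `(x_i)`), for the α-th family `S`. -/
def deltaX (S : Set (Finset ℕ)) (nrm : C00 → ℝ) (x : ℕ → C00) : ℝ :=
  sSup (deltaSetX S nrm x)

/-- `δ_α((x_i),(e_i))` (α-admissibility w.r.t. `(e_i)`), for the α-th family `S`. -/
def deltaE (S : Set (Finset ℕ)) (nrm : C00 → ℝ) (x : ℕ → C00) : ℝ :=
  sSup (deltaSetE S nrm x)

/-- `nrm'` is an equivalent norm to `nrm`. -/
def EquivNormOn (nrm nrm' : C00 → ℝ) : Prop :=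
  ∃ c C : ℝ, 0 < c ∧ (∀ x, c * nrm x ≤ nrm' x) ∧ ∀ x, nrm' x ≤ C * nrm x

/-- The set whose supremum is `δ̈`(S)`(y_i)`: all values `δ_S((z_i), |·|)` where `|·|`
is an equivalent norm on `X` and `(z_i)` is a block sequence of `(y_i)`. -/
def dessSet (S : Set (Finset ℕ)) (nrm : C00 → ℝ) (y : ℕ → C00) : Set ℝ :=
  {d : ℝ | ∃ (nrm' : C00 → ℝ) (z : ℕ → C00), IsNorm nrm' ∧ EquivNormOn nrm nrm' ∧
    IsBlockOf y z ∧ d = deltaX S nrm' z}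

/-- A Schreier hierarchy `(S_α)_{α < ω₁}`. -/
structure IsSchreierHierarchy (S : Ordinal → Set (Finset ℕ)) : Prop where
  zero : S 0 = {F : Finset ℕ | F.card ≤ 1}
  succ : ∀ α : Ordinal, α < Ordinal.omega 1 →
    S (α + 1) = {F : Finset ℕ | ∃ (k : ℕ) (Fs : Fin k → Finset ℕ),
      (∀ i, Fs i ∈ S α) ∧
      (∀ i j : Fin k, i < j → FinLt (Fs i) (Fs j)) ∧
      (∀ i, ∀ a ∈ Fs i, k ≤ a) ∧
      F = Finset.univ.biUnion Fs}
  limit : ∀ α : Ordinal, α < Ordinal.omega 1 → Order.IsSuccLimit α →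
    ∃ f : ℕ → Ordinal, StrictMono f ∧ (⨆ n, f n) = α ∧
      S α = {F : Finset ℕ | ∃ n : ℕ, (∀ a ∈ F, n ≤ a) ∧ F ∈ S (f n)}

/-- `(y_i)` Δ-stabilizes `γ = (γ_α)_{α<ω₁}`. -/
def DeltaStabilizes (S : Ordinal → Set (Finset ℕ)) (nrm : C00 → ℝ)
    (y : ℕ → C00) (γ : Ordinal → ℝ) : Prop :=
  ∃ ε : ℕ → ℝ, Antitone ε ∧ Tendsto ε atTop (nhds 0) ∧
    ∀ α : Ordinal, α < Ordinal.omega 1 → ∃ m : ℕ, ∀ n : ℕ, m ≤ n →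
      ∀ z : ℕ → C00, IsBlockOf (fun i => y (i + n)) z →
        |deltaX (S α) nrm z - γ α| < ε n

/-- `(y_i)` Δ_{(e_i)}-stabilizes `γ = (γ_α)_{α<ω₁}`. -/
def DeltaStabilizesE (S : Ordinal → Set (Finset ℕ)) (nrm : C00 → ℝ)
    (y : ℕ → C00) (γ : Ordinal → ℝ) : Prop :=
  ∃ ε : ℕ → ℝ, Antitone ε ∧ Tendsto ε atTop (nhds 0) ∧
    ∀ α : Ordinal, α < Ordinal.omega 1 → ∃ m : ℕ, ∀ n : ℕ, m ≤ n →
      ∀ z : ℕ → C00, IsBlockOf (fun i => y (i + n)) z →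
        |deltaE (S α) nrm z - γ α| < ε n

/-- `(e_i)` is a basic sequence for the norm `nrm`. -/
def IsBasicE (nrm : C00 → ℝ) : Prop :=
  ∃ K : ℝ, ∀ (a : ℕ → ℝ) (m n : ℕ), m ≤ n →
    nrm (∑ i ∈ Finset.range m, a i • eBasis i) ≤
      K * nrm (∑ i ∈ Finset.range n, a i • eBasis i)

/-- The auxiliary norm `‖x‖_p` (`‖·‖_0 = ‖·‖`). -/
def pnorm (θ : ℕ → ℝ) (nrm : C00 → ℝ) (p : ℕ) (x : C00) : ℝ :=
  if p = 0 then nrm x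
  else θ p * sSup {r : ℝ | ∃ (m : ℕ) (E : Fin m → Finset ℕ),
    AdmissibleIntervals (SchreierFam p) E ∧ r = ∑ i, nrm (restr (E i) x)}

/-- The auxiliary seminorm `‖x‖_{N,p}`. -/
def nNorm (θ : ℕ → ℝ) (nrm : C00 → ℝ) (N p : ℕ) (x : C00) : ℝ :=
  sSup {r : ℝ | ∃ E : Fin N → Finset ℕ, (∀ i, IsInterval (E i)) ∧
    (∀ i j : Fin N, i < j → FinLt (E i) (E j)) ∧ (∀ i, ∀ a ∈ E i, N ≤ a) ∧
    r = ∑ i, pnorm θ nrm p (restr (E i) x)}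

/-- The auxiliary norm `‖x‖_{S_q,p}`. -/
def sNNorm (θ : ℕ → ℝ) (nrm : C00 → ℝ) (q p : ℕ) (x : C00) : ℝ :=
  sSup {r : ℝ | ∃ (m : ℕ) (E : Fin m → Finset ℕ),
    AdmissibleIntervals (SchreierFam q) E ∧ r = ∑ i, pnorm θ nrm p (restr (E i) x)}

section Aux

open Finset

variable {nrm : C00 → ℝ}

lemma nrm_zero (hn : IsNorm nrm) : nrm 0 = 0 := by
  have := hn.2.1 0 0
  simpa using this

lemma nrm_nonneg (hn : IsNorm nrm) (v : C00) : 0 ≤ nrm v := by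
  rcases eq_or_ne v 0 with rfl | h
  · exact le_of_eq (nrm_zero hn).symm
  · exact le_of_lt (hn.2.2 v h)

lemma nrm_sum_le (hn : IsNorm nrm) {α : Type*} (s : Finset α) (f : α → C00) :
    nrm (∑ i ∈ s, f i) ≤ ∑ i ∈ s, nrm (f i) := by
  classical
  induction s using Finset.induction_on with
  | empty => simp [nrm_zero hn]
  | @insert a s h ih =>
      rw [Finset.sum_insert h, Finset.sum_insert h]
      exact le_trans (hn.1 _ _) (by linarith [ih])

lemma restr_apply (E : Finset ℕ) (v : C00) (k : ℕ) :
    restr E v k = if k ∈ E then v k else 0 := by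
  classical
  simp [restr, Finsupp.filter_apply]

lemma restr_support (E : Finset ℕ) (v : C00) :
    (restr E v).support = v.support.filter (· ∈ E) := by
  classical
  simp [restr, Finsupp.support_filter]

lemma restr_restr (E G : Finset ℕ) (v : C00) :
    restr E (restr G v) = restr (E ∩ G) v := by
  classical
  ext k
  simp only [restr_apply, Finset.mem_inter]
  by_cases h1 : k ∈ E <;> by_cases h2 : k ∈ G <;> simp [h1, h2]

lemma restr_eq_self {E : Finset ℕ} {v : C00} (h : v.support ⊆ E) :
    restr E v = v := by
  classical
  ext k
  rw [restr_apply]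
  by_cases hk : k ∈ E
  · simp [hk]
  · simp only [hk, if_false]
    by_contra h0
    exact hk (h (Finsupp.mem_support_iff.2 (fun hc => h0 hc.symm)))

lemma restr_add (E : Finset ℕ) (v w : C00) :
    restr E (v + w) = restr E v + restr E w := by
  classical
  ext k; simp only [restr_apply, Finsupp.add_apply]
  by_cases h : k ∈ E <;> simp [h]

lemma restr_sum (E : Finset ℕ) {α : Type*} (s : Finset α) (f : α → C00) :
    restr E (∑ i ∈ s, f i) = ∑ i ∈ s, restr E (f i) := by
  classical
  induction s using Finset.induction_on with
  | empty => ext k; simp [restr_apply]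
  | @insert a s h ih =>
      rw [Finset.sum_insert h, Finset.sum_insert h, restr_add, ih]

lemma restr_smul (E : Finset ℕ) (c : ℝ) (v : C00) :
    restr E (c • v) = c • restr E v := by
  classical
  ext k; simp only [restr_apply, Finsupp.smul_apply]
  by_cases h : k ∈ E <;> simp [h]

lemma restr_single (E : Finset ℕ) (c : ℝ) (k : ℕ) :
    restr E (Finsupp.single k c) = if k ∈ E then Finsupp.single k c else 0 := by
  classical
  ext l
  rw [restr_apply]
  by_cases hk : k ∈ E
  · simp only [hk, if_true]
    by_cases hlk : k = l
    · subst hlk; simp [hk]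
    · simp [Finsupp.single_apply, hlk]
  · by_cases hlk : k = l
    · subst hlk; simp [hk]
    · simp [hk, Finsupp.single_apply, hlk]

end Aux
section Schreier

open Finset

lemma finsetInf_mem {F : Finset ℕ} (h : F.Nonempty) : sInf (↑F : Set ℕ) ∈ F := by
  have : (↑F : Set ℕ).Nonempty := by exact_mod_cast h.to_set
  simpa using Nat.sInf_mem this

lemma finsetInf_le {F : Finset ℕ} {a : ℕ} (h : a ∈ F) : sInf (↑F : Set ℕ) ≤ a :=
  Nat.sInf_le (by simpa using h)

lemma schreier_empty (n : ℕ) : (∅ : Finset ℕ) ∈ SchreierFam n := by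
  cases n with
  | zero => simp [SchreierFam]
  | succ n =>
      refine ⟨0, fun i => ∅, ?_, ?_, ?_, ?_⟩
      · exact fun i => i.elim0
      · exact fun i => i.elim0
      · exact fun i => i.elim0
      · simp

lemma schreier_one_le {n : ℕ} (hn : 1 ≤ n) {F : Finset ℕ} (hF : F ∈ SchreierFam n)
    {a : ℕ} (ha : a ∈ F) : 1 ≤ a := by
  obtain ⟨m, rfl⟩ : ∃ m, n = m + 1 := ⟨n - 1, by omega⟩
  obtain ⟨k, Fs, h1, h2, h3, rfl⟩ := hF
  rw [Finset.mem_biUnion] at ha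
  obtain ⟨i, _, hai⟩ := ha
  have hk : 1 ≤ k := i.pos
  exact le_trans hk (h3 i a hai)

lemma schreier_hereditary : ∀ (n : ℕ) (F G : Finset ℕ),
    F ∈ SchreierFam n → G ⊆ F → G ∈ SchreierFam n := by
  intro n
  induction n with
  | zero =>
      intro F G hF hG
      exact le_trans (Finset.card_le_card hG) hF
  | succ n ih =>
      intro F G hF hG
      obtain ⟨k, Fs, h1, h2, h3, rfl⟩ := hF
      refine ⟨k, fun i => Fs i ∩ G, fun i => ih _ _ (h1 i) Finset.inter_subset_left,
        ?_, ?_, ?_⟩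
      · intro i j hij a ha b hb
        exact h2 i j hij a (Finset.mem_inter.1 ha).1 b (Finset.mem_inter.1 hb).1
      · intro i a ha
        exact h3 i a (Finset.mem_inter.1 ha).1
      · ext a
        simp only [Finset.mem_biUnion, Finset.mem_univ, true_and, Finset.mem_inter]
        constructor
        · intro haG
          obtain ⟨i, _, hi⟩ := Finset.mem_biUnion.1 (hG haG)
          exact ⟨i, hi, haG⟩
        · rintro ⟨i, _, h⟩; exact h

lemma schreier_singleton (n k : ℕ) (hk : 1 ≤ k) : ({k} : Finset ℕ) ∈ SchreierFam n := by
  induction n with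
  | zero => simp [SchreierFam]
  | succ n ih =>
      refine ⟨1, fun _ => {k}, fun _ => ih, ?_, ?_, ?_⟩
      · intro i j hij
        exact absurd hij (by omega)
      · intro i a ha
        simp only [Finset.mem_singleton] at ha
        omega
      · simp

lemma schreier_conv : ∀ (q p : ℕ) (I : Finset ℕ) (E K : ℕ → Finset ℕ),
    (∀ i ∈ I, (E i).Nonempty) →
    (∀ i ∈ I, ∀ j ∈ I, i < j → FinLt (E i) (E j)) →
    (∀ i ∈ I, K i ⊆ E i) →
    (∀ i ∈ I, K i ∈ SchreierFam p) →
    (I.image fun i => sInf ((E i : Set ℕ))) ∈ SchreierFam q →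
    I.biUnion K ∈ SchreierFam (p + q) := by
  intro q
  induction q with
  | zero =>
      intro p I E K hne hlt hsub hK hmin
      have hinj : Set.InjOn (fun i => sInf ((E i : Set ℕ))) I := by
        intro i hi j hj hij
        have hij2 : sInf ((E i : Set ℕ)) = sInf ((E j : Set ℕ)) := hij
        by_contra hne'
        rcases lt_or_gt_of_ne hne' with h | h
        · have := hlt i hi j hj h _ (finsetInf_mem (hne i hi)) _ (finsetInf_mem (hne j hj))
          omega
        · have := hlt j hj i hi h _ (finsetInf_mem (hne j hj)) _ (finsetInf_mem (hne i hi))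
          omega
      have hcard : I.card ≤ 1 := by
        have := Finset.card_image_of_injOn hinj
        have h0 : (I.image fun i => sInf ((E i : Set ℕ))).card ≤ 1 := hmin
        omega
      rcases Finset.card_le_one_iff_subset_singleton.1 hcard with ⟨x, hx⟩
      rcases Finset.subset_singleton_iff.1 hx with rfl | rfl
      · simpa using schreier_empty p
      · rw [Finset.singleton_biUnion]
        simpa using hK x (Finset.mem_singleton_self x)
  | succ q ih =>
      intro p I E K hne hlt hsub hK hmin
      obtain ⟨k, Ms, hMs, hMlt, hMk, hMeq⟩ := hmin
      classical
      set Is : Fin k → Finset ℕ := fun s => I.filter (fun i => sInf ((E i : Set ℕ)) ∈ Ms s) with hIs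
      have mem_Is : ∀ (s : Fin k) (i : ℕ),
          i ∈ Is s ↔ i ∈ I ∧ sInf ((E i : Set ℕ)) ∈ Ms s := by
        intro s i
        rw [hIs]
        simp
      refine ⟨k, fun s => (Is s).biUnion K, ?_, ?_, ?_, ?_⟩
      · intro s
        refine ih p (Is s) E K ?_ ?_ ?_ ?_ ?_
        · exact fun i hi => hne i ((mem_Is _ _).1 hi).1
        · exact fun i hi j hj => hlt i ((mem_Is _ _).1 hi).1 j ((mem_Is _ _).1 hj).1
        · exact fun i hi => hsub i ((mem_Is _ _).1 hi).1
        · exact fun i hi => hK i ((mem_Is _ _).1 hi).1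
        · refine schreier_hereditary q (Ms s) _ (hMs s) ?_
          intro x hx
          obtain ⟨i, hi, rfl⟩ := Finset.mem_image.1 hx
          exact ((mem_Is _ _).1 hi).2
      · intro s t hst a ha b hb
        obtain ⟨i, hi, hai⟩ := Finset.mem_biUnion.1 ha
        obtain ⟨i', hi', hbi⟩ := Finset.mem_biUnion.1 hb
        have hiI := ((mem_Is _ _).1 hi).1
        have hiI' := ((mem_Is _ _).1 hi').1
        have hms : sInf ((E i : Set ℕ)) ∈ Ms s := ((mem_Is _ _).1 hi).2
        have hmt : sInf ((E i' : Set ℕ)) ∈ Ms t := ((mem_Is _ _).1 hi').2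
        have hmm : sInf ((E i : Set ℕ)) < sInf ((E i' : Set ℕ)) := hMlt s t hst _ hms _ hmt
        have hii : i < i' := by
          rcases lt_trichotomy i i' with h | rfl | h
          · exact h
          · omega
          · have := hlt i' hiI' i hiI h _ (finsetInf_mem (hne i' hiI')) _ (finsetInf_mem (hne i hiI))
            omega
        exact hlt i hiI i' hiI' hii a (hsub i hiI hai) b (hsub i' hiI' hbi)
      · intro s a ha
        obtain ⟨i, hi, hai⟩ := Finset.mem_biUnion.1 ha
        have h1 : k ≤ sInf ((E i : Set ℕ)) := hMk s _ ((mem_Is _ _).1 hi).2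
        have h2 : sInf ((E i : Set ℕ)) ≤ a := finsetInf_le (hsub i ((mem_Is _ _).1 hi).1 hai)
        omega
      · ext a
        constructor
        · intro ha
          obtain ⟨i, hi, hai⟩ := Finset.mem_biUnion.1 ha
          have hmem : sInf ((E i : Set ℕ)) ∈ I.image fun i => sInf ((E i : Set ℕ)) :=
            Finset.mem_image_of_mem _ hi
          rw [hMeq] at hmem
          obtain ⟨s, _, hs⟩ := Finset.mem_biUnion.1 hmem
          exact Finset.mem_biUnion.2 ⟨s, Finset.mem_univ s,
            Finset.mem_biUnion.2 ⟨i, (mem_Is s i).2 ⟨hi, hs⟩, hai⟩⟩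
        · intro ha
          obtain ⟨s, _, hs⟩ := Finset.mem_biUnion.1 ha
          obtain ⟨i, hi, hai⟩ := Finset.mem_biUnion.1 hs
          exact Finset.mem_biUnion.2 ⟨i, ((mem_Is s i).1 hi).1, hai⟩

end Schreier
section NormFacts

variable {θ : ℕ → ℝ} {nrm : C00 → ℝ}

lemma theta_anti (hreg : RegularSeq θ) {p q : ℕ} (hp : 1 ≤ p) (hpq : p ≤ q) :
    θ q ≤ θ p := by
  have key : ∀ d : ℕ, θ (p + d) ≤ θ p := by
    intro d
    induction d with
    | zero => simp
    | succ d ih => exact le_trans (hreg.2.1 (p + d) (by omega)) ih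
  have := key (q - p)
  rwa [Nat.add_sub_cancel' hpq] at this

lemma theta_le_one (hreg : RegularSeq θ) {q : ℕ} (hq : 1 ≤ q) : θ q ≤ 1 :=
  (hreg.1 q hq).2.le

lemma theta_pos (hreg : RegularSeq θ) {q : ℕ} (hq : 1 ≤ q) : 0 < θ q :=
  (hreg.1 q hq).1

lemma adm_inj {S : Set (Finset ℕ)} {m : ℕ} {E : Fin m → Finset ℕ}
    (hE : AdmissibleSets S E) {i j : Fin m} {a : ℕ} (ha : a ∈ E i) (hb : a ∈ E j) :
    i = j := by
  by_contra h
  rcases lt_or_gt_of_ne h with hij | hij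
  · exact absurd (hE.2.1 i j hij a ha a hb) (lt_irrefl a)
  · exact absurd (hE.2.1 j i hij a hb a ha) (lt_irrefl a)

lemma nrm_eBasis (hreg : RegularSeq θ) (hn : IsNorm nrm) (hT : MixedTsirelsonNorm θ nrm)
    (k : ℕ) : nrm (eBasis k) = 1 := by
  classical
  set t := nrm (eBasis k) with ht
  have ht0 : 0 ≤ t := nrm_nonneg hn _
  have hub : ∀ r ∈ {r : ℝ | ∃ j, r = |(eBasis k) j|}, r ≤ 1 := by
    rintro r ⟨j, rfl⟩
    by_cases hjk : k = j
    · subst hjk; simp [eBasis]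
    · simp [eBasis, Finsupp.single_apply, hjk]
  have hA : sSup {r : ℝ | ∃ j, r = |(eBasis k) j|} = 1 := by
    apply le_antisymm
    · exact Real.sSup_le hub (by norm_num)
    · apply le_csSup ⟨1, hub⟩
      exact ⟨k, by simp [eBasis]⟩
  have hB : sSup {r : ℝ | ∃ (q m : ℕ) (E : Fin m → Finset ℕ), 1 ≤ q ∧
      AdmissibleSets (SchreierFam q) E ∧
      r = θ q * ∑ i, nrm (restr (E i) (eBasis k))} ≤ θ 1 * t := by
    apply Real.sSup_le
    · rintro r ⟨q, m, E, hq, hE, rfl⟩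
      have hsum : ∑ i, nrm (restr (E i) (eBasis k)) ≤ t := by
        by_cases hex : ∃ i, k ∈ E i
        · obtain ⟨i0, hi0⟩ := hex
          have : ∑ i, nrm (restr (E i) (eBasis k)) = nrm (restr (E i0) (eBasis k)) := by
            apply Finset.sum_eq_single_of_mem i0 (Finset.mem_univ i0)
            intro b _ hb
            have hkb : k ∉ E b := fun hc => hb (adm_inj hE hc hi0)
            rw [eBasis, restr_single, if_neg hkb, nrm_zero hn]
          rw [this, eBasis, restr_single, if_pos hi0]
          exact le_of_eq rfl
        · push_neg at hex
          have : ∀ i ∈ (Finset.univ : Finset (Fin m)), nrm (restr (E i) (eBasis k)) = 0 := by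
            intro i _
            rw [eBasis, restr_single, if_neg (hex i), nrm_zero hn]
          rw [Finset.sum_eq_zero this]
          exact ht0
      have hθ : θ q ≤ θ 1 := theta_anti hreg le_rfl hq
      have hθ0 : 0 ≤ θ q := (theta_pos hreg hq).le
      calc θ q * ∑ i, nrm (restr (E i) (eBasis k)) ≤ θ q * t :=
            mul_le_mul_of_nonneg_left hsum hθ0
        _ ≤ θ 1 * t := mul_le_mul_of_nonneg_right hθ ht0
    · exact mul_nonneg (theta_pos hreg le_rfl).le ht0
  have heq := hT (eBasis k)
  rw [hA] at heq
  rw [← ht] at heq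
  have h1t : 1 ≤ t := by rw [heq]; exact le_max_left _ _
  have hθ1 : θ 1 < 1 := (hreg.1 1 le_rfl).2
  have hmax : t ≤ max 1 (θ 1 * t) :=
    le_trans (le_of_eq heq) (max_le (le_max_left _ _) (le_trans hB (le_max_right _ _)))
  rcases max_cases 1 (θ 1 * t) with ⟨hm, _⟩ | ⟨hm, hcm⟩
  · rw [hm] at hmax; linarith
  · rw [hm] at hmax; nlinarith

lemma nrm_single (hreg : RegularSeq θ) (hn : IsNorm nrm) (hT : MixedTsirelsonNorm θ nrm)
    (k : ℕ) (c : ℝ) : nrm (Finsupp.single k c) = |c| := by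
  have : Finsupp.single k c = c • eBasis k := by
    rw [eBasis, Finsupp.smul_single']
    norm_num
  rw [this, hn.2.1, nrm_eBasis hreg hn hT]
  ring

lemma ell1 (hreg : RegularSeq θ) (hn : IsNorm nrm) (hT : MixedTsirelsonNorm θ nrm)
    (v : C00) : nrm v ≤ ∑ k ∈ v.support, |v k| := by
  conv_lhs => rw [← Finsupp.sum_single v]
  rw [Finsupp.sum]
  refine le_trans (nrm_sum_le hn _ _) ?_
  apply Finset.sum_le_sum
  intro k _
  rw [nrm_single hreg hn hT]

lemma restr_nrm_le (hreg : RegularSeq θ) (hn : IsNorm nrm) (hT : MixedTsirelsonNorm θ nrm)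
    (E : Finset ℕ) (x : C00) :
    nrm (restr E x) ≤ ∑ k ∈ x.support.filter (· ∈ E), |x k| := by
  classical
  refine le_trans (ell1 hreg hn hT _) ?_
  rw [restr_support]
  apply le_of_eq
  apply Finset.sum_congr rfl
  intro k hk
  rw [restr_apply, if_pos (Finset.mem_filter.1 hk).2]

lemma sum_restr_nrm_le (hreg : RegularSeq θ) (hn : IsNorm nrm)
    (hT : MixedTsirelsonNorm θ nrm) {m : ℕ} {S : Set (Finset ℕ)}
    {E : Fin m → Finset ℕ} (hE : AdmissibleSets S E) (x : C00) :
    ∑ i, nrm (restr (E i) x) ≤ ∑ k ∈ x.support, |x k| := by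
  classical
  have h1 : ∑ i, nrm (restr (E i) x) ≤
      ∑ i : Fin m, ∑ k ∈ x.support.filter (· ∈ E i), |x k| :=
    Finset.sum_le_sum fun i _ => restr_nrm_le hreg hn hT _ _
  refine le_trans h1 ?_
  rw [← Finset.sum_biUnion]
  · apply Finset.sum_le_sum_of_subset_of_nonneg
    · intro k hk
      exact (Finset.mem_filter.1 (Finset.mem_biUnion.1 hk).choose_spec.2).1
    · intro k _ _; exact abs_nonneg _
  · intro i _ j _ hij
    apply Finset.disjoint_left.2
    intro k hk1 hk2
    exact hij (adm_inj hE (Finset.mem_filter.1 hk1).2 (Finset.mem_filter.1 hk2).2)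

lemma nrm_ge_decomp (hreg : RegularSeq θ) (hn : IsNorm nrm)
    (hT : MixedTsirelsonNorm θ nrm) (x : C00) {q m : ℕ} (E : Fin m → Finset ℕ)
    (hq : 1 ≤ q) (hE : AdmissibleSets (SchreierFam q) E) :
    θ q * ∑ i, nrm (restr (E i) x) ≤ nrm x := by
  classical
  have hbdd : ∀ r ∈ {r : ℝ | ∃ (q m : ℕ) (E : Fin m → Finset ℕ), 1 ≤ q ∧
      AdmissibleSets (SchreierFam q) E ∧ r = θ q * ∑ i, nrm (restr (E i) x)},
      r ≤ ∑ k ∈ x.support, |x k| := by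
    rintro r ⟨q', m', E', hq', hE', rfl⟩
    have h1 := sum_restr_nrm_le hreg hn hT hE' x
    have h2 : θ q' ≤ 1 := theta_le_one hreg hq'
    have h3 : 0 ≤ ∑ i, nrm (restr (E' i) x) :=
      Finset.sum_nonneg fun i _ => nrm_nonneg hn _
    nlinarith
  have hmem : θ q * ∑ i, nrm (restr (E i) x) ∈ {r : ℝ | ∃ (q m : ℕ)
      (E : Fin m → Finset ℕ), 1 ≤ q ∧ AdmissibleSets (SchreierFam q) E ∧
      r = θ q * ∑ i, nrm (restr (E i) x)} := ⟨q, m, E, hq, hE, rfl⟩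
  have := le_csSup ⟨_, hbdd⟩ hmem
  refine le_trans this ?_
  rw [hT x]
  exact le_max_right _ _

lemma nrm_le_bound (hreg : RegularSeq θ) (hn : IsNorm nrm)
    (hT : MixedTsirelsonNorm θ nrm) (x : C00) (c : ℝ) (hc : 0 ≤ c)
    (hinf : ∀ k, |x k| ≤ c)
    (hdec : ∀ (q m : ℕ) (E : Fin m → Finset ℕ), 1 ≤ q →
      AdmissibleSets (SchreierFam q) E →
      θ q * ∑ i, nrm (restr (E i) x) ≤ max c (θ 1 * nrm x)) :
    nrm x ≤ c := by
  have h1 : sSup {r : ℝ | ∃ j, r = |x j|} ≤ c :=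
    Real.sSup_le (by rintro r ⟨jj, rfl⟩; exact hinf jj) hc
  have h2 : sSup {r : ℝ | ∃ (q m : ℕ) (E : Fin m → Finset ℕ), 1 ≤ q ∧
      AdmissibleSets (SchreierFam q) E ∧ r = θ q * ∑ i, nrm (restr (E i) x)} ≤
      max c (θ 1 * nrm x) := by
    apply Real.sSup_le
    · rintro r ⟨q, m, E, hq, hE, rfl⟩
      exact hdec q m E hq hE
    · exact le_trans hc (le_max_left _ _)
  have h3 : nrm x ≤ max c (θ 1 * nrm x) :=
    le_trans (le_of_eq (hT x)) (max_le (le_trans h1 (le_max_left _ _)) h2)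
  rcases max_cases c (θ 1 * nrm x) with ⟨hm, _⟩ | ⟨hm, hcm⟩
  · rwa [hm] at h3
  · rw [hm] at h3
    have hθ1 : θ 1 < 1 := (hreg.1 1 le_rfl).2
    have h0 : 0 ≤ nrm x := nrm_nonneg hn x
    nlinarith

end NormFacts
section Master

open scoped Classical in
noncomputable def Bsup (a : ℕ → ℝ) (d : ℕ) (G : Finset ℕ) : ℝ :=
  (G.powerset.filter (· ∈ SchreierFam d)).sup'
    ⟨∅, Finset.mem_filter.2 ⟨Finset.empty_mem_powerset G, schreier_empty d⟩⟩
    (fun H => ∑ k ∈ H, a k)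

lemma le_Bsup (a : ℕ → ℝ) (d : ℕ) {H G : Finset ℕ} (h1 : H ⊆ G)
    (h2 : H ∈ SchreierFam d) : ∑ k ∈ H, a k ≤ Bsup a d G := by
  classical
  unfold Bsup
  exact Finset.le_sup' (fun H => ∑ k ∈ H, a k) (Finset.mem_filter.2 ⟨Finset.mem_powerset.2 h1, h2⟩)

lemma Bsup_le (a : ℕ → ℝ) (d : ℕ) {G : Finset ℕ} {c : ℝ}
    (h : ∀ H ⊆ G, H ∈ SchreierFam d → ∑ k ∈ H, a k ≤ c) : Bsup a d G ≤ c := by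
  classical
  unfold Bsup
  exact Finset.sup'_le _ _ fun H hH =>
    h H (Finset.mem_powerset.1 (Finset.mem_filter.1 hH).1) (Finset.mem_filter.1 hH).2

lemma Bsup_exists (a : ℕ → ℝ) (d : ℕ) (G : Finset ℕ) :
    ∃ H, H ⊆ G ∧ H ∈ SchreierFam d ∧ Bsup a d G = ∑ k ∈ H, a k := by
  classical
  obtain ⟨H, hH, hval⟩ := Finset.exists_mem_eq_sup'
    (⟨∅, Finset.mem_filter.2 ⟨Finset.empty_mem_powerset G, schreier_empty d⟩⟩ :
      (G.powerset.filter (· ∈ SchreierFam d)).Nonempty) (fun H => ∑ k ∈ H, a k)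
  exact ⟨H, Finset.mem_powerset.1 (Finset.mem_filter.1 hH).1,
    (Finset.mem_filter.1 hH).2, hval⟩

lemma Bsup_nonneg {a : ℕ → ℝ} (d : ℕ) (G : Finset ℕ) : 0 ≤ Bsup a d G := by
  have := le_Bsup a d (Finset.empty_subset G) (schreier_empty d)
  simpa using this

lemma sum_single_apply (s : Finset ℕ) (f : ℕ → ℝ) (l : ℕ) :
    (∑ k ∈ s, Finsupp.single k (f k)) l = if l ∈ s then f l else 0 := by
  classical
  rw [Finsupp.finset_sum_apply]
  by_cases hl : l ∈ s
  · rw [Finset.sum_eq_single_of_mem l hl]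
    · simp [hl]
    · intro b _ hbl
      exact Finsupp.single_eq_of_ne' hbl
  · rw [if_neg hl]
    apply Finset.sum_eq_zero
    intro b hb
    exact Finsupp.single_eq_of_ne (fun h => hl (h ▸ hb))

lemma image_univ_fin {β : Type*} [DecidableEq β] (m : ℕ) (g : Fin m → β) (g' : ℕ → β)
    (hg : ∀ i : Fin m, g' i.val = g i) :
    (Finset.range m).image g' = Finset.univ.image g := by
  ext b
  simp only [Finset.mem_image, Finset.mem_range, Finset.mem_univ, true_and]
  constructor
  · rintro ⟨i, him, rfl⟩
    exact ⟨⟨i, him⟩, (hg ⟨i, him⟩).symm⟩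
  · rintro ⟨i, rfl⟩
    exact ⟨i.val, i.isLt, hg i⟩

variable {θ : ℕ → ℝ} {nrm : C00 → ℝ}

lemma restr_x0 (a : ℕ → ℝ) (F G : Finset ℕ) :
    restr G (∑ k ∈ F, Finsupp.single k (a k)) = ∑ k ∈ G ∩ F, Finsupp.single k (a k) := by
  classical
  ext l
  rw [restr_apply, sum_single_apply, sum_single_apply]
  by_cases h1 : l ∈ G <;> by_cases h2 : l ∈ F <;>
    simp [h1, h2, Finset.mem_inter]

lemma x0_support {a : ℕ → ℝ} {F : Finset ℕ} (ha : ∀ k ∈ F, 0 < a k) :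
    (∑ k ∈ F, Finsupp.single k (a k)).support = F := by
  classical
  ext l
  rw [Finsupp.mem_support_iff, sum_single_apply]
  by_cases h : l ∈ F
  · simp [h]; exact (ha l h).ne'
  · simp [h]

lemma nu_nonneg {a : ℕ → ℝ} {F : Finset ℕ} (ha : ∀ k ∈ F, 0 < a k) (G : Finset ℕ) :
    0 ≤ ∑ k ∈ G ∩ F, a k :=
  Finset.sum_nonneg fun k hk => (ha k (Finset.mem_inter.1 hk).2).le

lemma nrm_restr_x0_le_nu (hreg : RegularSeq θ) (hn : IsNorm nrm)
    (hT : MixedTsirelsonNorm θ nrm) {a : ℕ → ℝ} {F : Finset ℕ}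
    (ha : ∀ k ∈ F, 0 < a k) (G : Finset ℕ) :
    nrm (restr G (∑ k ∈ F, Finsupp.single k (a k))) ≤ ∑ k ∈ G ∩ F, a k := by
  rw [restr_x0]
  refine le_trans (nrm_sum_le hn _ _) ?_
  apply le_of_eq
  apply Finset.sum_congr rfl
  intro k hk
  rw [nrm_single hreg hn hT, abs_of_pos (ha k (Finset.mem_inter.1 hk).2)]

lemma master (hreg : RegularSeq θ) (hn : IsNorm nrm) (hT : MixedTsirelsonNorm θ nrm)
    (a : ℕ → ℝ) (F : Finset ℕ) (ha : ∀ k ∈ F, 0 < a k) (hF1 : ∀ k ∈ F, 1 ≤ k) :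
    ∀ (N : ℕ) (G : Finset ℕ) (b : ℕ), (G ∩ F).card ≤ N → 1 ≤ b →
      nrm (restr G (∑ k ∈ F, Finsupp.single k (a k))) ≤
        θ b * (∑ k ∈ G ∩ F, a k) + Bsup a (b - 1) (G ∩ F) := by
  classical
  set x₀ := ∑ k ∈ F, Finsupp.single k (a k) with hx₀
  intro N
  induction N with
  | zero =>
      intro G b hcard hb
      have hGF : G ∩ F = ∅ := Finset.card_eq_zero.1 (Nat.le_zero.1 hcard)
      have : restr G x₀ = 0 := by
        rw [restr_x0, hGF]
        simp
      rw [this, nrm_zero hn]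
      have := Bsup_nonneg (a := a) (b - 1) (G ∩ F)
      have := nu_nonneg ha G
      have := theta_pos hreg hb
      nlinarith
  | succ N ih =>
      intro G b hcard hb
      by_cases hGF : G ∩ F = ∅
      · have : restr G x₀ = 0 := by rw [restr_x0, hGF]; simp
        rw [this, nrm_zero hn]
        have := Bsup_nonneg (a := a) (b - 1) (G ∩ F)
        have := nu_nonneg ha G
        have := theta_pos hreg hb
        nlinarith
      set ν : ℝ := ∑ k ∈ G ∩ F, a k with hν
      set B : ℝ := Bsup a (b - 1) (G ∩ F) with hBB
      have hν0 : 0 ≤ ν := nu_nonneg ha G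
      have hB0 : 0 ≤ B := Bsup_nonneg _ _
      have hθb : 0 < θ b := theta_pos hreg hb
      have hc0 : 0 ≤ θ b * ν + B := by nlinarith
      have hysupp : (restr G x₀).support = G ∩ F := by
        rw [restr_x0]
        exact x0_support (fun k hk => ha k (Finset.mem_inter.1 hk).2)
      apply nrm_le_bound hreg hn hT _ _ hc0
      · -- sup-norm part
        intro l
        have happ : (restr G x₀) l = if l ∈ G ∩ F then a l else 0 := by
          rw [restr_x0, sum_single_apply]
        rw [happ]
        by_cases hl : l ∈ G ∩ F
        · rw [if_pos hl, abs_of_pos (ha l (Finset.mem_inter.1 hl).2)]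
          have hsing : ({l} : Finset ℕ) ∈ SchreierFam (b - 1) :=
            schreier_singleton _ _ (hF1 l (Finset.mem_inter.1 hl).2)
          have := le_Bsup a (b - 1) (Finset.singleton_subset_iff.2 hl) hsing
          simp only [Finset.sum_singleton] at this
          nlinarith
        · rw [if_neg hl]
          simpa using hc0
      · -- decomposition part
        intro q m E hq hE
        have hrr : ∀ i : Fin m, restr (E i) (restr G x₀) = restr (E i ∩ G) x₀ :=
          fun i => restr_restr _ _ _
        by_cases hfull : ∃ i : Fin m, G ∩ F ⊆ E i
        · obtain ⟨i0, hi0⟩ := hfull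
          have hself : restr (E i0) (restr G x₀) = restr G x₀ :=
            restr_eq_self (by rw [hysupp]; exact hi0)
          have hzero : ∀ i : Fin m, i ≠ i0 → restr (E i) (restr G x₀) = 0 := by
            intro i hi
            have hsupp : (restr (E i) (restr G x₀)).support = ∅ := by
              rw [restr_support, hysupp]
              apply Finset.filter_eq_empty_iff.2
              intro k hk hkEi
              exact hi (adm_inj hE hkEi (hi0 hk))
            exact Finsupp.support_eq_empty.1 hsupp
          have hsum : ∑ i, nrm (restr (E i) (restr G x₀)) = nrm (restr G x₀) := by
            rw [Finset.sum_eq_single_of_mem i0 (Finset.mem_univ i0)]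
            · rw [hself]
            · intro i _ hi
              rw [hzero i hi, nrm_zero hn]
          rw [hsum]
          have h1 : θ q ≤ θ 1 := theta_anti hreg le_rfl hq
          have h2 : 0 ≤ nrm (restr G x₀) := nrm_nonneg hn _
          refine le_trans ?_ (le_max_right _ _)
          nlinarith
        · push_neg at hfull
          have hAsub : ∀ i : Fin m, E i ∩ G ∩ F ⊆ G ∩ F := by
            intro i k hk
            rw [Finset.inter_assoc] at hk
            exact (Finset.mem_inter.1 hk).2
          have hproper : ∀ i : Fin m, (E i ∩ G ∩ F).card < (G ∩ F).card := by
            intro i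
            apply Finset.card_lt_card
            rw [Finset.ssubset_iff_subset_ne]
            refine ⟨hAsub i, ?_⟩
            intro heq
            apply hfull i
            intro k hk
            have hk2 : k ∈ E i ∩ G ∩ F := heq.symm ▸ hk
            exact (Finset.mem_inter.1 (Finset.mem_inter.1 hk2).1).1
          have hS1 : ∑ i : Fin m, ∑ k ∈ E i ∩ G ∩ F, a k ≤ ν := by
            have hdisj : ∀ i ∈ (Finset.univ : Finset (Fin m)), ∀ j ∈ Finset.univ,
                i ≠ j → Disjoint (E i ∩ G ∩ F) (E j ∩ G ∩ F) := by
              intro i _ j _ hij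
              apply Finset.disjoint_left.2
              intro k hk1 hk2
              exact hij (adm_inj hE (Finset.mem_inter.1 (Finset.mem_inter.1 hk1).1).1
                (Finset.mem_inter.1 (Finset.mem_inter.1 hk2).1).1)
            rw [← Finset.sum_biUnion hdisj]
            apply Finset.sum_le_sum_of_subset_of_nonneg
            · intro k hk
              obtain ⟨i, _, hki⟩ := Finset.mem_biUnion.1 hk
              exact hAsub i hki
            · intro k hk _
              exact (ha k (Finset.mem_inter.1 hk).2).le
          have hS10 : 0 ≤ ∑ i : Fin m, ∑ k ∈ E i ∩ G ∩ F, a k := by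
            apply Finset.sum_nonneg
            intro i _
            apply Finset.sum_nonneg
            intro k hk
            exact (ha k (Finset.mem_inter.1 (hAsub i hk)).2).le
          rcases le_or_gt b q with hqb | hqb
          · -- q ≥ b : plain ℓ¹ estimate
            have hterm : ∀ i : Fin m, nrm (restr (E i) (restr G x₀)) ≤
                ∑ k ∈ E i ∩ G ∩ F, a k := by
              intro i
              rw [hrr i]
              exact nrm_restr_x0_le_nu hreg hn hT ha (E i ∩ G)
            have hsum' : ∑ i, nrm (restr (E i) (restr G x₀)) ≤ ν :=
              le_trans (Finset.sum_le_sum fun i _ => hterm i) hS1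
            have hθqb : θ q ≤ θ b := theta_anti hreg hb hqb
            have hsn : 0 ≤ ∑ i, nrm (restr (E i) (restr G x₀)) :=
              Finset.sum_nonneg fun i _ => nrm_nonneg hn _
            refine le_trans ?_ (le_max_left _ _)
            nlinarith
          · -- q < b : use the inductive hypothesis at depth b - q
            have hbq1 : 1 ≤ b - q := by omega
            have hterm : ∀ i : Fin m, nrm (restr (E i) (restr G x₀)) ≤
                θ (b - q) * (∑ k ∈ E i ∩ G ∩ F, a k) +
                  Bsup a (b - q - 1) (E i ∩ G ∩ F) := by
              intro i
              rw [hrr i]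
              have := ih (E i ∩ G) (b - q) (by
                have := hproper i
                rw [Finset.inter_assoc] at this ⊢
                omega) hbq1
              rw [Finset.inter_assoc] at this ⊢
              exact this
            have hex : ∀ i : Fin m, ∃ H, H ⊆ E i ∩ G ∩ F ∧
                H ∈ SchreierFam (b - q - 1) ∧
                Bsup a (b - q - 1) (E i ∩ G ∩ F) = ∑ k ∈ H, a k :=
              fun i => Bsup_exists a (b - q - 1) (E i ∩ G ∩ F)
            choose Hf hHsub hHmem hHval using hex
            -- the union of the Hf i is a set in SchreierFam (b-1) inside G ∩ F
            set K' : ℕ → Finset ℕ := fun i => if h : i < m then Hf ⟨i, h⟩ else ∅ with hK'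
            set E' : ℕ → Finset ℕ := fun i => if h : i < m then E ⟨i, h⟩ else ∅ with hE'
            have hK'val : ∀ i : Fin m, K' i.val = Hf i := by
              intro i; rw [hK']; simp [i.isLt]
            have hE'val : ∀ i : Fin m, E' i.val = E i := by
              intro i; rw [hE']; simp [i.isLt]
            have hU : (Finset.range m).biUnion K' ∈ SchreierFam (b - 1) := by
              have hconv := schreier_conv q (b - q - 1) (Finset.range m) E' K'
                (by intro i hi
                    rw [Finset.mem_range] at hi
                    rw [show i = (⟨i, hi⟩ : Fin m).val from rfl, hE'val]
                    exact hE.1 ⟨i, hi⟩)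
                (by intro i hi j hj hij
                    rw [Finset.mem_range] at hi hj
                    rw [show i = (⟨i, hi⟩ : Fin m).val from rfl, hE'val]
                    rw [show j = (⟨j, hj⟩ : Fin m).val from rfl, hE'val]
                    exact hE.2.1 ⟨i, hi⟩ ⟨j, hj⟩ hij)
                (by intro i hi
                    rw [Finset.mem_range] at hi
                    rw [show i = (⟨i, hi⟩ : Fin m).val from rfl, hE'val, hK'val]
                    exact fun k hk => (Finset.mem_inter.1 ((Finset.mem_inter.1
                      (hHsub ⟨i, hi⟩ hk))).1).1)
                (by intro i hi
                    rw [Finset.mem_range] at hi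
                    rw [show i = (⟨i, hi⟩ : Fin m).val from rfl, hK'val]
                    exact hHmem ⟨i, hi⟩)
                (by rw [image_univ_fin m (fun i => sInf ((E i : Set ℕ)))
                      (fun i => sInf ((E' i : Set ℕ))) (fun i => by
                        show sInf ((E' i.val : Set ℕ)) = sInf ((E i : Set ℕ))
                        rw [hE'val])]
                    exact hE.2.2)
              have harith : b - q - 1 + q = b - 1 := by omega
              rwa [harith] at hconv
            have hUsub : (Finset.range m).biUnion K' ⊆ G ∩ F := by
              intro k hk
              obtain ⟨i, hi, hki⟩ := Finset.mem_biUnion.1 hk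
              rw [Finset.mem_range] at hi
              rw [show i = (⟨i, hi⟩ : Fin m).val from rfl, hK'val] at hki
              exact hAsub ⟨i, hi⟩ (hHsub ⟨i, hi⟩ hki)
            have hS2eq : ∑ i : Fin m, ∑ k ∈ Hf i, a k =
                ∑ k ∈ (Finset.range m).biUnion K', a k := by
              have hdisjK : ∀ i ∈ Finset.range m, ∀ j ∈ Finset.range m,
                  i ≠ j → Disjoint (K' i) (K' j) := by
                intro i hi j hj hij
                rw [Finset.mem_range] at hi hj
                apply Finset.disjoint_left.2
                intro k hk1 hk2
                rw [show i = (⟨i, hi⟩ : Fin m).val from rfl, hK'val] at hk1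
                rw [show j = (⟨j, hj⟩ : Fin m).val from rfl, hK'val] at hk2
                have h1 := Finset.mem_inter.1 (Finset.mem_inter.1 (hHsub ⟨i, hi⟩ hk1)).1
                have h2 := Finset.mem_inter.1 (Finset.mem_inter.1 (hHsub ⟨j, hj⟩ hk2)).1
                have := adm_inj hE h1.1 h2.1
                rw [Fin.mk.injEq] at this
                exact hij this
              rw [Finset.sum_biUnion hdisjK]
              rw [← Fin.sum_univ_eq_sum_range (fun i => ∑ k ∈ K' i, a k) m]
              apply Finset.sum_congr rfl
              intro i _
              rw [hK'val]
            have hS2le : ∑ i : Fin m, ∑ k ∈ Hf i, a k ≤ B := by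
              rw [hS2eq]
              exact le_Bsup a (b - 1) hUsub hU
            have hS20 : 0 ≤ ∑ i : Fin m, ∑ k ∈ Hf i, a k := by
              apply Finset.sum_nonneg
              intro i _
              apply Finset.sum_nonneg
              intro k hk
              exact (ha k (Finset.mem_inter.1 (hAsub i (hHsub i hk))).2).le
            -- put things together
            have hsum' : ∑ i, nrm (restr (E i) (restr G x₀)) ≤
                θ (b - q) * (∑ i : Fin m, ∑ k ∈ E i ∩ G ∩ F, a k) +
                  ∑ i : Fin m, ∑ k ∈ Hf i, a k := by
              calc ∑ i, nrm (restr (E i) (restr G x₀)) ≤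
                  ∑ i : Fin m, (θ (b - q) * (∑ k ∈ E i ∩ G ∩ F, a k) +
                    Bsup a (b - q - 1) (E i ∩ G ∩ F)) :=
                    Finset.sum_le_sum fun i _ => hterm i
                _ = θ (b - q) * (∑ i : Fin m, ∑ k ∈ E i ∩ G ∩ F, a k) +
                    ∑ i : Fin m, ∑ k ∈ Hf i, a k := by
                    rw [Finset.sum_add_distrib, Finset.mul_sum]
                    congr 1
                    apply Finset.sum_congr rfl
                    intro i _
                    rw [hHval]
            have hθmul : θ q * θ (b - q) ≤ θ b := by
              have := hreg.2.2.2 q (b - q) hq hbq1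
              rwa [show q + (b - q) = b by omega] at this
            have hθq0 : 0 < θ q := theta_pos hreg hq
            have hθq1 : θ q ≤ 1 := theta_le_one hreg hq
            have hθbq0 : 0 < θ (b - q) := theta_pos hreg hbq1
            have hsn : 0 ≤ ∑ i, nrm (restr (E i) (restr G x₀)) :=
              Finset.sum_nonneg fun i _ => nrm_nonneg hn _
            refine le_trans ?_ (le_max_left _ _)
            calc θ q * ∑ i, nrm (restr (E i) (restr G x₀)) ≤
                θ q * (θ (b - q) * (∑ i : Fin m, ∑ k ∈ E i ∩ G ∩ F, a k) +
                  ∑ i : Fin m, ∑ k ∈ Hf i, a k) :=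
                  mul_le_mul_of_nonneg_left hsum' hθq0.le
              _ ≤ θ b * ν + B := by nlinarith
  
end Master
section SCC

lemma schreier_one_of (F : Finset ℕ) (h : ∀ x ∈ F, F.card ≤ x) :
    F ∈ SchreierFam 1 := by
  classical
  have hcard : F.card = F.card := rfl
  set e := F.orderIsoOfFin hcard with he
  refine ⟨F.card, fun i => {(e i : ℕ)}, ?_, ?_, ?_, ?_⟩
  · intro i
    simp [SchreierFam]
  · intro i j hij a ha b hb
    simp only [Finset.mem_singleton] at ha hb
    subst ha; subst hb
    have : (e i : F) < e j := by
      rw [OrderIso.lt_iff_lt]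
      exact hij
    exact_mod_cast this
  · intro i a ha
    simp only [Finset.mem_singleton] at ha
    subst ha
    exact h _ (e i).2
  · ext x
    simp only [Finset.mem_biUnion, Finset.mem_univ, true_and, Finset.mem_singleton]
    constructor
    · rintro hx
      refine ⟨e.symm ⟨x, hx⟩, ?_⟩
      rw [OrderIso.apply_symm_apply]
    · rintro ⟨i, rfl⟩
      exact (e i).2

lemma scc_main : ∀ (j : ℕ), 1 ≤ j → ∀ (ε : ℝ), 0 < ε → ∀ (M : ℕ),
    ∃ (F : Finset ℕ) (a : ℕ → ℝ),
      F ∈ SchreierFam j ∧ F.Nonempty ∧ (∀ k ∈ F, max M 1 ≤ k) ∧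
      (∀ k ∈ F, 0 < a k) ∧ (∑ k ∈ F, a k) = 1 ∧
      ∀ H ∈ SchreierFam (j - 1), ∑ k ∈ H ∩ F, a k ≤ ε := by
  intro j hj
  induction j, hj using Nat.le_induction with
  | base =>
      intro ε hε M
      obtain ⟨n₀, hn₀⟩ := exists_nat_gt ε⁻¹
      set n := max (max M 1) n₀ with hn
      have hn1 : 1 ≤ n := le_trans (le_max_right M 1) (le_max_left _ _)
      have hnR : (0:ℝ) < n := by exact_mod_cast hn1
      have hninv : (n:ℝ)⁻¹ ≤ ε := by
        have h1 : ε⁻¹ < (n:ℝ) := lt_of_lt_of_le hn₀ (by exact_mod_cast le_max_right (max M 1) n₀)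
        have h2 : ε * ε⁻¹ = 1 := mul_inv_cancel₀ (ne_of_gt hε)
        have h3 : (n:ℝ) * (n:ℝ)⁻¹ = 1 := mul_inv_cancel₀ (ne_of_gt hnR)
        nlinarith [inv_pos.2 hε, inv_pos.2 hnR]
      refine ⟨Finset.Ico n (2*n), fun _ => (n:ℝ)⁻¹, ?_, ?_, ?_, ?_, ?_, ?_⟩
      · apply schreier_one_of
        intro x hx
        rw [Finset.mem_Ico] at hx
        have : (Finset.Ico n (2*n)).card = n := by
          rw [Nat.card_Ico]; omega
        omega
      · exact ⟨n, Finset.mem_Ico.2 ⟨le_rfl, by omega⟩⟩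
      · intro k hk
        rw [Finset.mem_Ico] at hk
        have : max M 1 ≤ n := le_max_left _ _
        omega
      · intro k _; exact inv_pos.2 hnR
      · rw [Finset.sum_const, Nat.card_Ico]
        have : 2 * n - n = n := by omega
        rw [this, nsmul_eq_mul, mul_inv_cancel₀ (ne_of_gt hnR)]
      · intro H hH
        have hcard : (H ∩ Finset.Ico n (2*n)).card ≤ 1 :=
          le_trans (Finset.card_le_card Finset.inter_subset_left) hH
        rw [Finset.sum_const, nsmul_eq_mul]
        calc ((H ∩ Finset.Ico n (2*n)).card : ℝ) * (n:ℝ)⁻¹ ≤ 1 * (n:ℝ)⁻¹ := by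
              apply mul_le_mul_of_nonneg_right _ (inv_pos.2 hnR).le
              exact_mod_cast hcard
          _ ≤ ε := by rw [one_mul]; exact hninv
  | succ j hj1 IH =>
      intro ε hε M
      classical
      obtain ⟨n₀, hn₀⟩ := exists_nat_gt (2/ε)
      set n := max (max M 1) n₀ with hn
      have hn1 : 1 ≤ n := le_trans (le_max_right M 1) (le_max_left _ _)
      have hnR : (0:ℝ) < n := by exact_mod_cast hn1
      have hninv : (n:ℝ)⁻¹ ≤ ε/2 := by
        have h1 : 2/ε < (n:ℝ) := lt_of_lt_of_le hn₀
          (by exact_mod_cast le_max_right (max M 1) n₀)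
        rw [div_lt_iff₀ hε] at h1
        have h3 : (n:ℝ) * (n:ℝ)⁻¹ = 1 := mul_inv_cancel₀ (ne_of_gt hnR)
        nlinarith [inv_pos.2 hnR]
      have hstep : ∀ M' : ℕ, ∃ (F : Finset ℕ) (a : ℕ → ℝ),
          F ∈ SchreierFam j ∧ F.Nonempty ∧ (∀ k ∈ F, max M' 1 ≤ k) ∧
          (∀ k ∈ F, 0 < a k) ∧ (∑ k ∈ F, a k) = 1 ∧
          ∀ H ∈ SchreierFam (j - 1), ∑ k ∈ H ∩ F, a k ≤ ε / (2 * (M' + 1)) := by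
        intro M'
        exact IH (ε / (2 * (M' + 1))) (by positivity) M'
      choose Gf af hG1 hG2 hG3 hG4 hG5 hG6 using hstep
      set Mq : ℕ → ℕ := fun t =>
        Nat.rec (max M n) (fun _ ih => (Gf ih).sup id + 1) t with hMq
      have hMqS : ∀ t, Mq (t+1) = (Gf (Mq t)).sup id + 1 := fun t => rfl
      set Ft : ℕ → Finset ℕ := fun t => Gf (Mq t) with hFt
      have hFlt : ∀ t, ∀ k ∈ Ft t, k < Mq (t+1) := by
        intro t k hk
        have h := Finset.le_sup (f := id) hk
        rw [hMqS]
        simpa using Nat.lt_succ_of_le h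
      have hFge : ∀ t, ∀ k ∈ Ft t, Mq t ≤ k := fun t k hk =>
        le_trans (le_max_left _ _) (hG3 _ k hk)
      have hMqlt : ∀ t, Mq t < Mq (t+1) := by
        intro t
        obtain ⟨k, hk⟩ := hG2 (Mq t)
        exact lt_of_le_of_lt (hFge t k hk) (hFlt t k hk)
      have hMqmono : StrictMono Mq := strictMono_nat_of_lt_succ hMqlt
      have hFinLt : ∀ s t : ℕ, s < t → FinLt (Ft s) (Ft t) := by
        intro s t hst aa haa bb hbb
        have h1 := hFlt s aa haa
        have h2 := hFge t bb hbb
        have h3 : Mq (s+1) ≤ Mq t := hMqmono.monotone hst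
        omega
      have hFtsub : ∀ t : Fin n, Ft t.val ⊆ Finset.univ.biUnion (fun t : Fin n => Ft t.val) := by
        intro t k hk
        exact Finset.mem_biUnion.2 ⟨t, Finset.mem_univ t, hk⟩
      set F : Finset ℕ := Finset.univ.biUnion (fun t : Fin n => Ft t.val) with hF
      set a : ℕ → ℝ := fun k =>
        (n:ℝ)⁻¹ * ∑ t : Fin n, (if k ∈ Ft t.val then af (Mq t.val) k else 0) with ha
      have huniq : ∀ (s t : ℕ) (k : ℕ), k ∈ Ft s → k ∈ Ft t → s = t := by
        intro s t k hks hkt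
        rcases lt_trichotomy s t with h | h | h
        · exact absurd (hFinLt s t h k hks k hkt) (lt_irrefl k)
        · exact h
        · exact absurd (hFinLt t s h k hkt k hks) (lt_irrefl k)
      have haF : ∀ (t : Fin n), ∀ k ∈ Ft t.val, a k = (n:ℝ)⁻¹ * af (Mq t.val) k := by
        intro t k hk
        have hone : (∑ s : Fin n, if k ∈ Ft s.val then af (Mq s.val) k else 0) =
            af (Mq t.val) k := by
          rw [Finset.sum_eq_single_of_mem t (Finset.mem_univ t)]
          · rw [if_pos hk]
          · intro s _ hst
            rw [if_neg]
            intro hks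
            exact hst (Fin.ext (huniq s.val t.val k hks hk))
        calc a k = (n:ℝ)⁻¹ * ∑ s : Fin n, (if k ∈ Ft s.val then af (Mq s.val) k else 0) := rfl
          _ = (n:ℝ)⁻¹ * af (Mq t.val) k := by rw [hone]
      have hsum_t : ∀ t : Fin n, ∑ k ∈ Ft t.val, af (Mq t.val) k = 1 := fun t => hG5 _
      have hmass : ∀ (t : Fin n) (H : Finset ℕ), H ∈ SchreierFam (j - 1) →
          ∑ k ∈ H ∩ Ft t.val, af (Mq t.val) k ≤ ε / (2 * (Mq t.val + 1)) :=
        fun t H hH => hG6 _ H hH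
      have hrestr : ∀ (t : Fin n) (H : Finset ℕ),
          ∑ k ∈ H ∩ F, (if k ∈ Ft t.val then af (Mq t.val) k else 0) =
            ∑ k ∈ H ∩ Ft t.val, af (Mq t.val) k := by
        intro t H
        rw [Finset.sum_ite_mem]
        congr 1
        ext k
        simp only [Finset.mem_inter]
        constructor
        · rintro ⟨⟨hk1, _⟩, hk3⟩; exact ⟨hk1, hk3⟩
        · rintro ⟨hk1, hk3⟩; exact ⟨⟨hk1, hFtsub t hk3⟩, hk3⟩
      refine ⟨F, a, ?_, ?_, ?_, ?_, ?_, ?_⟩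
      · -- F ∈ SchreierFam (j+1)
        refine ⟨n, fun t : Fin n => Ft t.val, fun t => hG1 _, ?_, ?_, hF⟩
        · intro s t hst
          exact hFinLt s.val t.val hst
        · intro t k hk
          have h1 : Mq 0 ≤ Mq t.val := hMqmono.monotone (Nat.zero_le _)
          have h2 := hFge t.val k hk
          have h3 : n ≤ Mq 0 := le_max_right M n
          omega
      · obtain ⟨k, hk⟩ := hG2 (Mq 0)
        exact ⟨k, Finset.mem_biUnion.2 ⟨⟨0, by omega⟩, Finset.mem_univ _, hk⟩⟩
      · intro k hk
        obtain ⟨t, _, hkt⟩ := Finset.mem_biUnion.1 hk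
        have h1 : Mq 0 ≤ Mq t.val := hMqmono.monotone (Nat.zero_le _)
        have h2 := hFge t.val k hkt
        have h3 : max M n ≤ Mq 0 := le_rfl
        have h4 : max M 1 ≤ max M n := max_le_max le_rfl hn1
        omega
      · intro k hk
        obtain ⟨t, _, hkt⟩ := Finset.mem_biUnion.1 hk
        rw [haF t k hkt]
        exact mul_pos (inv_pos.2 hnR) (hG4 _ k hkt)
      · -- total sum is 1
        have h00 : ∑ k ∈ F, a k = (n:ℝ)⁻¹ *
            ∑ k ∈ F, ∑ t : Fin n, (if k ∈ Ft t.val then af (Mq t.val) k else 0) := by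
          rw [Finset.mul_sum]
        have : ∑ k ∈ F, a k =
            (n:ℝ)⁻¹ * ∑ t : Fin n, ∑ k ∈ F, (if k ∈ Ft t.val then af (Mq t.val) k else 0) := by
          rw [h00, Finset.sum_comm]
        rw [this]
        have heach : ∀ t : Fin n,
            ∑ k ∈ F, (if k ∈ Ft t.val then af (Mq t.val) k else 0) = 1 := by
          intro t
          rw [Finset.sum_ite_mem, Finset.inter_eq_right.2 (hFtsub t), hsum_t t]
        rw [Finset.sum_congr rfl (fun t _ => heach t)]
        simp only [Finset.sum_const, Finset.card_univ, Fintype.card_fin, nsmul_eq_mul, mul_one]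
        exact inv_mul_cancel₀ (ne_of_gt hnR)
      · -- the scc mass estimate
        intro H hH
        obtain ⟨j', rfl⟩ : ∃ j'', j = j'' + 1 := ⟨j - 1, by omega⟩
        obtain ⟨kH, Hs, hHs1, hHs2, hHs3, hHeq⟩ := hH
        have hsplit : ∑ k ∈ H ∩ F, a k =
            (n:ℝ)⁻¹ * ∑ t : Fin n, ∑ k ∈ H ∩ Ft t.val, af (Mq t.val) k := by
          have h00 : ∑ k ∈ H ∩ F, a k = (n:ℝ)⁻¹ *
              ∑ k ∈ H ∩ F, ∑ t : Fin n, (if k ∈ Ft t.val then af (Mq t.val) k else 0) := by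
            rw [Finset.mul_sum]
          have h0 : ∑ k ∈ H ∩ F, a k = (n:ℝ)⁻¹ * ∑ t : Fin n,
              ∑ k ∈ H ∩ F, (if k ∈ Ft t.val then af (Mq t.val) k else 0) := by
            rw [h00, Finset.sum_comm]
          rw [h0]
          congr 1
          exact Finset.sum_congr rfl fun t _ => hrestr t H
        rw [hsplit]
        set g : Fin n → ℝ := fun t => ∑ k ∈ H ∩ Ft t.val, af (Mq t.val) k with hg
        have hg0 : ∀ t, 0 ≤ g t := by
          intro t
          apply Finset.sum_nonneg
          intro k hk
          exact (hG4 _ k (Finset.mem_inter.1 hk).2).le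
        have hg1 : ∀ t, g t ≤ 1 := by
          intro t
          rw [hg, ← hsum_t t]
          apply Finset.sum_le_sum_of_subset_of_nonneg Finset.inter_subset_right
          intro k hk _
          exact (hG4 _ k hk).le
        by_cases hne : (Finset.univ.filter (fun t : Fin n => (H ∩ Ft t.val).Nonempty)).Nonempty
        · set t₀ : Fin n := (Finset.univ.filter
            (fun t : Fin n => (H ∩ Ft t.val).Nonempty)).min' hne with ht₀
          have ht₀mem : (H ∩ Ft t₀.val).Nonempty :=
            (Finset.mem_filter.1 (Finset.min'_mem _ hne)).2
          obtain ⟨x, hx⟩ := ht₀mem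
          have hkHx : kH ≤ x := by
            have hxH : x ∈ H := (Finset.mem_inter.1 hx).1
            rw [hHeq] at hxH
            obtain ⟨s, _, hxs⟩ := Finset.mem_biUnion.1 hxH
            exact hHs3 s x hxs
          have hgsmall : ∀ t ∈ Finset.univ.erase t₀, g t ≤ ε / 2 := by
            intro t htmem
            by_cases hnet : (H ∩ Ft t.val).Nonempty
            · have ht₀t : t₀ < t := by
                have h1 : t₀ ≤ t := Finset.min'_le _ t (Finset.mem_filter.2 ⟨Finset.mem_univ t, hnet⟩)
                have h2 : t ≠ t₀ := (Finset.mem_erase.1 htmem).1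
                exact lt_of_le_of_ne h1 (Ne.symm h2)
              have hMqt : kH < Mq t.val := by
                have hx2 : x < Mq (t₀.val + 1) := hFlt _ x (Finset.mem_inter.1 hx).2
                have h3 : Mq (t₀.val + 1) ≤ Mq t.val := hMqmono.monotone ht₀t
                omega
              have hdisjH : ∀ s ∈ (Finset.univ : Finset (Fin kH)), ∀ s' ∈ Finset.univ,
                  s ≠ s' → Disjoint (Hs s ∩ Ft t.val) (Hs s' ∩ Ft t.val) := by
                intro s _ s' _ hss'
                apply Finset.disjoint_left.2
                intro k hk1 hk2
                rcases lt_trichotomy s s' with h | h | h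
                · exact absurd (hHs2 s s' h k (Finset.mem_inter.1 hk1).1 k
                    (Finset.mem_inter.1 hk2).1) (lt_irrefl k)
                · exact hss' h
                · exact absurd (hHs2 s' s h k (Finset.mem_inter.1 hk2).1 k
                    (Finset.mem_inter.1 hk1).1) (lt_irrefl k)
              have hHinter : H ∩ Ft t.val =
                  Finset.univ.biUnion (fun s : Fin kH => Hs s ∩ Ft t.val) := by
                rw [hHeq, Finset.biUnion_inter]
              have : g t = ∑ s : Fin kH, ∑ k ∈ Hs s ∩ Ft t.val, af (Mq t.val) k := by
                rw [hg]
                simp only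
                rw [hHinter, Finset.sum_biUnion hdisjH]
              rw [this]
              have hbound : ∀ s : Fin kH,
                  ∑ k ∈ Hs s ∩ Ft t.val, af (Mq t.val) k ≤ ε / (2 * (Mq t.val + 1)) :=
                fun s => hmass t (Hs s) (hHs1 s)
              calc ∑ s : Fin kH, ∑ k ∈ Hs s ∩ Ft t.val, af (Mq t.val) k ≤
                  ∑ s : Fin kH, ε / (2 * (Mq t.val + 1)) :=
                    Finset.sum_le_sum fun s _ => hbound s
                _ = kH * (ε / (2 * (Mq t.val + 1))) := by
                    rw [Finset.sum_const, Finset.card_univ, Fintype.card_fin, nsmul_eq_mul]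
                _ ≤ ε / 2 := by
                    have hkHle : (kH:ℝ) ≤ (Mq t.val : ℝ) + 1 := by
                      have : (kH:ℝ) ≤ (Mq t.val : ℝ) := by exact_mod_cast hMqt.le
                      linarith
                    have hne0 : ((Mq t.val : ℝ) + 1) ≠ 0 := by positivity
                    have h1 : (kH:ℝ) * (ε / (2 * ((Mq t.val:ℝ) + 1))) ≤
                        ((Mq t.val:ℝ) + 1) * (ε / (2 * ((Mq t.val:ℝ) + 1))) :=
                      mul_le_mul_of_nonneg_right hkHle (by positivity)
                    have h2 : ((Mq t.val:ℝ) + 1) * (ε / (2 * ((Mq t.val:ℝ) + 1))) = ε / 2 := by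
                      field_simp
                    rw [h2] at h1
                    exact h1
            · rw [Finset.not_nonempty_iff_eq_empty] at hnet
              rw [hg]
              simp only
              rw [hnet, Finset.sum_empty]
              positivity
          have htotal : ∑ t : Fin n, g t ≤ 1 + n * (ε / 2) := by
            rw [← Finset.sum_erase_add _ _ (Finset.mem_univ t₀)]
            have h1 : ∑ t ∈ Finset.univ.erase t₀, g t ≤
                ∑ t ∈ Finset.univ.erase t₀, (ε / 2) :=
              Finset.sum_le_sum hgsmall
            have h2 : ∑ t ∈ Finset.univ.erase t₀, (ε / 2 : ℝ) =
                ((Finset.univ.erase t₀).card : ℝ) * (ε / 2) := by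
              rw [Finset.sum_const, nsmul_eq_mul]
            have h3 : ((Finset.univ.erase t₀).card : ℝ) ≤ n := by
              have := Finset.card_erase_le (a := t₀) (s := (Finset.univ : Finset (Fin n)))
              have hcu : (Finset.univ : Finset (Fin n)).card = n := by
                rw [Finset.card_univ, Fintype.card_fin]
              have : (Finset.univ.erase t₀).card ≤ n := by omega
              exact_mod_cast this
            have h4 := hg1 t₀
            have h5 : (0:ℝ) ≤ ε / 2 := by positivity
            nlinarith
          calc (n:ℝ)⁻¹ * ∑ t : Fin n, g t ≤ (n:ℝ)⁻¹ * (1 + n * (ε / 2)) := by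
                apply mul_le_mul_of_nonneg_left htotal (inv_pos.2 hnR).le
            _ = (n:ℝ)⁻¹ + (n:ℝ)⁻¹ * n * (ε/2) := by ring
            _ ≤ ε := by
                rw [inv_mul_cancel₀ (ne_of_gt hnR)]
                linarith
        · rw [Finset.not_nonempty_iff_eq_empty] at hne
          have hzero : ∀ t : Fin n, g t = 0 := by
            intro t
            have : ¬(H ∩ Ft t.val).Nonempty := by
              intro hcon
              have : t ∈ Finset.univ.filter (fun t : Fin n => (H ∩ Ft t.val).Nonempty) :=
                Finset.mem_filter.2 ⟨Finset.mem_univ t, hcon⟩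
              rw [hne] at this
              exact absurd this (Finset.notMem_empty t)
            rw [Finset.not_nonempty_iff_eq_empty] at this
            rw [hg]
            simp only
            rw [this, Finset.sum_empty]
          rw [Finset.sum_congr rfl (fun t _ => hzero t)]
          simp
          positivity

end SCC
section Lower

variable {θ : ℕ → ℝ} {nrm : C00 → ℝ}

lemma supp_coe (v : C00) : ((v.support : Set ℕ)) = {j | v j ≠ 0} := by
  ext j; simp [Finsupp.mem_support_iff]

lemma sInf_coe_support (v : C00) : sInf ((v.support : Set ℕ)) = minSupp v := by
  rw [minSupp, supp_coe]

lemma minSupp_single (k : ℕ) (c : ℝ) (hc : c ≠ 0) :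
    minSupp (Finsupp.single k c) = k := by
  rw [minSupp]
  have : {j : ℕ | Finsupp.single k c j ≠ 0} = {k} := by
    ext j
    simp only [Set.mem_setOf_eq, Set.mem_singleton_iff, Finsupp.single_apply]
    constructor
    · intro h
      by_contra hjk
      exact h (by rw [if_neg (fun hc' => hjk hc'.symm)])
    · intro h
      subst h
      rw [if_pos rfl]
      exact hc
  rw [this]
  exact csInf_singleton k

lemma blk_supp (a : ℕ → ℝ) (m : ℕ → ℕ) (i : ℕ) :
    (blk eBasis a m i).support ⊆ Finset.Ico (m i) (m (i + 1)) := by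
  classical
  intro k hk
  rw [blk] at hk
  have := Finsupp.support_finset_sum (s := Finset.Ico (m i) (m (i+1)))
    (f := fun l => a l • eBasis l) hk
  obtain ⟨l, hl, hkl⟩ := Finset.mem_biUnion.1 this
  have hsub : (a l • eBasis l).support ⊆ {l} := by
    refine le_trans (Finsupp.support_smul) ?_
    rw [eBasis]
    exact Finsupp.support_single_subset
  have := hsub hkl
  rw [Finset.mem_singleton] at this
  subst this
  exact hl

lemma theta_mem_deltaSetE (hreg : RegularSeq θ) (hn : IsNorm nrm)
    (hT : MixedTsirelsonNorm θ nrm) (j : ℕ) (hj : 1 ≤ j) :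
    θ j ∈ deltaSetE (SchreierFam j) nrm eBasis := by
  classical
  refine ⟨(theta_pos hreg hj).le, ?_⟩
  intro n a m hm hnz hadm
  rcases Nat.eq_zero_or_pos n with rfl | hn0
  · simp only [Finset.range_zero, Finset.sum_empty, mul_zero]
    exact nrm_nonneg hn _
  set E : Fin n → Finset ℕ := fun i => (blk eBasis a m i.val).support with hE
  have hEne : ∀ i : Fin n, (E i).Nonempty := by
    intro i
    rw [hE]
    rw [Finset.nonempty_iff_ne_empty, Ne, Finsupp.support_eq_empty]
    exact hnz i.val i.isLt
  have hElt : ∀ i i' : Fin n, i < i' → FinLt (E i) (E i') := by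
    intro i i' hii' x hx y hy
    have h1 := Finset.mem_Ico.1 (blk_supp a m i.val hx)
    have h2 := Finset.mem_Ico.1 (blk_supp a m i'.val hy)
    have h3 : m (i.val + 1) ≤ m i'.val := hm.monotone hii'
    omega
  have hadm' : AdmissibleSets (SchreierFam j) E := by
    refine ⟨hEne, hElt, ?_⟩
    have himg : (Finset.range n).image (fun i => minSupp (blk eBasis a m i)) =
        Finset.univ.image (fun i : Fin n => sInf ((E i : Set ℕ))) :=
      image_univ_fin n (fun i : Fin n => sInf ((E i : Set ℕ)))
        (fun i => minSupp (blk eBasis a m i))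
        (fun i => by
          show minSupp (blk eBasis a m i.val) = sInf ((E i : Set ℕ))
          rw [hE]
          exact (sInf_coe_support _).symm)
    rw [← himg]
    exact hadm
  -- restrictions recover the blocks
  set x : C00 := ∑ i ∈ Finset.range n, blk eBasis a m i with hx
  have hdisj : ∀ (l l' : ℕ), l < n → l' < n → l ≠ l' →
      ∀ k, k ∈ (blk eBasis a m l).support → k ∈ (blk eBasis a m l').support → False := by
    intro l l' hl hl' hll' k hk1 hk2
    have h1 := Finset.mem_Ico.1 (blk_supp a m l hk1)
    have h2 := Finset.mem_Ico.1 (blk_supp a m l' hk2)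
    rcases lt_or_gt_of_ne hll' with h | h
    · have := hm.monotone (show l + 1 ≤ l' by omega)
      omega
    · have := hm.monotone (show l' + 1 ≤ l by omega)
      omega
  have hrestr : ∀ i : Fin n, restr (E i) x = blk eBasis a m i.val := by
    intro i
    rw [hx, restr_sum]
    rw [Finset.sum_eq_single_of_mem i.val (Finset.mem_range.2 i.isLt)]
    · exact restr_eq_self subset_rfl
    · intro l hl hli
      have hsupp : (restr (E i) (blk eBasis a m l)).support = ∅ := by
        rw [restr_support, Finset.filter_eq_empty_iff]
        intro k hk hkE
        exact hdisj l i.val (Finset.mem_range.1 hl) i.isLt hli k hk hkE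
      exact Finsupp.support_eq_empty.1 hsupp
  have hkey := nrm_ge_decomp hreg hn hT x E hj hadm'
  have hsum : ∑ i : Fin n, nrm (restr (E i) x) =
      ∑ i ∈ Finset.range n, nrm (blk eBasis a m i) := by
    rw [← Fin.sum_univ_eq_sum_range (fun i => nrm (blk eBasis a m i)) n]
    exact Finset.sum_congr rfl fun i _ => by rw [hrestr i]
  rw [hsum] at hkey
  exact hkey

lemma deltaSetE_bddAbove (hreg : RegularSeq θ) (hn : IsNorm nrm)
    (hT : MixedTsirelsonNorm θ nrm) (j : ℕ) (hj : 1 ≤ j) :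
    BddAbove (deltaSetE (SchreierFam j) nrm eBasis) := by
  classical
  refine ⟨1, ?_⟩
  rintro δ ⟨hδ0, hδ⟩
  have hblk : blk eBasis (fun _ => (1:ℝ)) (fun i => i + 1) 0 = eBasis 1 := by
    rw [blk]
    have : Finset.Ico 1 2 = {1} := rfl
    rw [this, Finset.sum_singleton, one_smul]
  have h1 := hδ 1 (fun _ => (1:ℝ)) (fun i => i + 1)
    (fun p q hpq => by simpa using hpq)
    (by intro i hi
        interval_cases i
        rw [hblk, eBasis]
        exact fun h => one_ne_zero (Finsupp.single_eq_zero.1 h))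
    (by
      have : (Finset.range 1).image
          (fun i => minSupp (blk eBasis (fun _ => (1:ℝ)) (fun i => i + 1) i)) = {1} := by
        rw [Finset.range_one, Finset.image_singleton, hblk, eBasis,
          minSupp_single 1 1 one_ne_zero]
      rw [this]
      exact schreier_singleton j 1 le_rfl)
  rw [Finset.range_one, Finset.sum_singleton, Finset.sum_singleton, hblk] at h1
  rw [nrm_eBasis hreg hn hT 1] at h1
  linarith

end Lower
section Upper

variable {θ : ℕ → ℝ} {nrm : C00 → ℝ}

lemma sum_orderIso {β : Type*} [AddCommMonoid β] (F : Finset ℕ) (f : ℕ → β) :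
    ∑ i : Fin F.card, f ((F.orderIsoOfFin rfl i : ℕ)) = ∑ k ∈ F, f k := by
  apply Finset.sum_bij (fun (i : Fin F.card) (_ : i ∈ Finset.univ) =>
    ((F.orderIsoOfFin rfl i : ℕ)))
  · intro i _
    exact (F.orderIsoOfFin rfl i).2
  · intro i _ i' _ h
    exact (F.orderIsoOfFin rfl).injective (Subtype.ext h)
  · intro k hk
    exact ⟨(F.orderIsoOfFin rfl).symm ⟨k, hk⟩, Finset.mem_univ _,
      by rw [OrderIso.apply_symm_apply]⟩
  · intro i _
    rfl

lemma image_orderIso (F : Finset ℕ) :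
    Finset.univ.image (fun i : Fin F.card => ((F.orderIsoOfFin rfl i : ℕ))) = F := by
  ext k
  simp only [Finset.mem_image, Finset.mem_univ, true_and]
  constructor
  · rintro ⟨i, rfl⟩
    exact (F.orderIsoOfFin rfl i).2
  · intro hk
    exact ⟨(F.orderIsoOfFin rfl).symm ⟨k, hk⟩, by rw [OrderIso.apply_symm_apply]⟩

lemma deltaSetE_le_theta (hreg : RegularSeq θ) (hn : IsNorm nrm)
    (hT : MixedTsirelsonNorm θ nrm) (j : ℕ) (hj : 1 ≤ j) :
    ∀ δ ∈ deltaSetE (SchreierFam j) nrm eBasis, δ ≤ θ j := by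
  classical
  rintro δ ⟨hδ0, hδ⟩
  refine le_of_forall_pos_le_add ?_
  intro ε hε
  obtain ⟨F, a, hF, hFne, hFge, hapos, hasum, hmass⟩ := scc_main j hj ε hε 1
  have hF1 : ∀ k ∈ F, 1 ≤ k := by
    intro k hk
    have := hFge k hk
    omega
  have hnn0 : 0 < F.card := Finset.card_pos.2 hFne
  set e := F.orderIsoOfFin rfl with he
  have emono : ∀ (s t : Fin F.card), s < t → ((e s : ℕ)) < ((e t : ℕ)) := by
    intro s t h
    exact_mod_cast (e.lt_iff_lt.2 h)
  have ele : ∀ (s t : Fin F.card), s ≤ t → ((e s : ℕ)) ≤ ((e t : ℕ)) := by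
    intro s t h
    exact_mod_cast (e.le_iff_le.2 h)
  set m : ℕ → ℕ := fun i => if h : i < F.card then (e ⟨i, h⟩ : ℕ)
    else (e ⟨F.card - 1, Nat.sub_lt hnn0 one_pos⟩ : ℕ) + 1 + (i - F.card) with hmdef
  have hmval : ∀ (i : ℕ) (h : i < F.card), m i = (e ⟨i, h⟩ : ℕ) := by
    intro i h
    rw [hmdef]
    exact dif_pos h
  have hmtop : ∀ i : ℕ, F.card ≤ i →
      m i = (e ⟨F.card - 1, Nat.sub_lt hnn0 one_pos⟩ : ℕ) + 1 + (i - F.card) := by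
    intro i h
    rw [hmdef]
    exact dif_neg (by omega)
  have hm : StrictMono m := by
    apply strictMono_nat_of_lt_succ
    intro i
    by_cases h1 : i + 1 < F.card
    · rw [hmval i (by omega), hmval (i+1) h1]
      exact emono _ _ (by simp [Fin.lt_def])
    · by_cases h2 : i < F.card
      · rw [hmval i h2, hmtop (i+1) (by omega)]
        have hieq : (⟨i, h2⟩ : Fin F.card) = ⟨F.card - 1, Nat.sub_lt hnn0 one_pos⟩ :=
          Fin.ext (by simp; omega)
        rw [hieq]
        omega
      · rw [hmtop i (by omega), hmtop (i+1) (by omega)]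
        omega
  set A : ℕ → ℝ := fun k => if k ∈ F then a k else 0 with hA
  have huniq : ∀ (i : Fin F.card), ∀ l ∈ F, m i.val ≤ l → l < m (i.val + 1) →
      l = (e i : ℕ) := by
    intro i l hlF hl1 hl2
    set s : Fin F.card := e.symm ⟨l, hlF⟩ with hs
    have hes : ((e s : ℕ)) = l := by rw [hs, OrderIso.apply_symm_apply]
    have his : i ≤ s := by
      by_contra hcon
      push_neg at hcon
      have := emono s i hcon
      rw [hes] at this
      rw [hmval i.val i.isLt] at hl1
      have : (e ⟨i.val, i.isLt⟩ : ℕ) = (e i : ℕ) := by congr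
      omega
    by_cases hc : i.val + 1 < F.card
    · rw [hmval (i.val+1) hc] at hl2
      have hsi : s < (⟨i.val + 1, hc⟩ : Fin F.card) := by
        by_contra hcon
        push_neg at hcon
        have := ele _ _ hcon
        rw [hes] at this
        omega
      have : s = i := by
        apply Fin.ext
        have h1 : s.val < i.val + 1 := hsi
        have h2 : i.val ≤ s.val := his
        omega
      rw [← hes, this]
    · have : s = i := by
        apply Fin.ext
        have h1 : s.val ≤ F.card - 1 := by omega
        have h2 : i.val ≤ s.val := his
        have h3 : i.val = F.card - 1 ∨ i.val < F.card - 1 := by omega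
        omega
      rw [← hes, this]
  have hmem : ∀ i : Fin F.card, (e i : ℕ) ∈ Finset.Ico (m i.val) (m (i.val + 1)) := by
    intro i
    rw [Finset.mem_Ico, hmval i.val i.isLt]
    constructor
    · apply le_of_eq
      congr
    · by_cases hc : i.val + 1 < F.card
      · rw [hmval (i.val+1) hc]
        have heta : (⟨i.val, i.isLt⟩ : Fin F.card) = i := rfl
        exact emono i ⟨i.val+1, hc⟩ (by rw [Fin.lt_def]; simp)
      · rw [hmtop (i.val+1) (by omega)]
        have h1 : (e i : ℕ) ≤ (e ⟨F.card - 1, Nat.sub_lt hnn0 one_pos⟩ : ℕ) := by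
          apply ele
          rw [Fin.le_def]
          have := i.isLt
          simp
          omega
        omega
  have hblk : ∀ i : Fin F.card,
      blk eBasis A m i.val = Finsupp.single ((e i : ℕ)) (a (e i)) := by
    intro i
    rw [blk]
    have hpt : ∀ l ∈ Finset.Ico (m i.val) (m (i.val + 1)),
        A l • eBasis l = if (e i : ℕ) = l then Finsupp.single ((e i : ℕ)) (a (e i)) else 0 := by
      intro l hl
      by_cases hlF : l ∈ F
      · have hleq : l = (e i : ℕ) :=
          huniq i l hlF (Finset.mem_Ico.1 hl).1 (Finset.mem_Ico.1 hl).2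
        rw [hleq, if_pos rfl]
        have hAe : A ((e i : ℕ)) = a ((e i : ℕ)) := by rw [hA]; simp [(e i).2]
        rw [hAe, eBasis, Finsupp.smul_single', mul_one]
      · have hA0 : A l = 0 := by rw [hA]; simp [hlF]
        rw [hA0, zero_smul, if_neg]
        intro hcon
        rw [← hcon] at hlF
        exact hlF (e i).2
    rw [Finset.sum_congr rfl hpt, Finset.sum_ite_eq, if_pos (hmem i)]
  have hapos' : ∀ i : Fin F.card, a ((e i : ℕ)) ≠ 0 := fun i => (hapos _ (e i).2).ne'
  have hnz : ∀ i < F.card, blk eBasis A m i ≠ 0 := by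
    intro i hi
    have := hblk ⟨i, hi⟩
    simp only at this
    rw [this]
    intro hcon
    exact hapos' ⟨i, hi⟩ (Finsupp.single_eq_zero.1 hcon)
  have himg : (Finset.range F.card).image (fun i => minSupp (blk eBasis A m i)) = F := by
    rw [image_univ_fin F.card (fun i : Fin F.card => ((e i : ℕ)))
      (fun i => minSupp (blk eBasis A m i))
      (fun i => by
        show minSupp (blk eBasis A m i.val) = (e i : ℕ)
        rw [hblk i, minSupp_single _ _ (hapos' i)])]
    exact image_orderIso F
  have hsum1 : ∑ i ∈ Finset.range F.card, nrm (blk eBasis A m i) = 1 := by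
    rw [← Fin.sum_univ_eq_sum_range (fun i => nrm (blk eBasis A m i)) F.card]
    have : ∀ i : Fin F.card, nrm (blk eBasis A m i.val) = a ((e i : ℕ)) := by
      intro i
      rw [hblk i, nrm_single hreg hn hT, abs_of_pos (hapos _ (e i).2)]
    rw [Finset.sum_congr rfl (fun i _ => this i)]
    rw [sum_orderIso F a]
    exact hasum
  have hsumblk : ∑ i ∈ Finset.range F.card, blk eBasis A m i =
      ∑ k ∈ F, Finsupp.single k (a k) := by
    rw [← Fin.sum_univ_eq_sum_range (fun i => blk eBasis A m i) F.card]
    rw [Finset.sum_congr rfl (fun i _ => hblk i)]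
    exact sum_orderIso F (fun k => Finsupp.single k (a k))
  have hkey := hδ F.card A m hm hnz (by rw [himg]; exact hF)
  rw [hsum1, hsumblk, mul_one] at hkey
  -- now bound the norm of the s.c.c. vector using the master lemma
  have hx0 : restr F (∑ k ∈ F, Finsupp.single k (a k)) = ∑ k ∈ F, Finsupp.single k (a k) :=
    restr_eq_self (by rw [x0_support hapos])
  have hmaster := master hreg hn hT a F hapos hF1 (F ∩ F).card F j le_rfl hj
  rw [hx0, Finset.inter_self] at hmaster
  have hBle : Bsup a (j - 1) F ≤ ε := by
    apply Bsup_le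
    intro H hHsub hHmem
    have := hmass H hHmem
    rwa [Finset.inter_eq_left.2 hHsub] at this
  refine le_trans hkey (le_trans hmaster ?_)
  rw [hasum]
  linarith

end Upper

/-- Theorem 4.14: `δ_j(X) = θ_j` for every `j ≥ 1`, where `δ_j(X)` is computed for
the unit vector basis `(e_i)` of `X = T(θ_n,S_n)`. -/
theorem delta_j_of_basis_eq_theta_j
    (θ : ℕ → ℝ) (hreg : RegularSeq θ)
    (nrm : C00 → ℝ) (hn : IsNorm nrm) (hT : MixedTsirelsonNorm θ nrm)
    (j : ℕ) (hj : 1 ≤ j) :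
    deltaE (SchreierFam j) nrm eBasis = θ j := by
  rw [deltaE]
  apply le_antisymm
  · exact Real.sSup_le (deltaSetE_le_theta hreg hn hT j hj) (theta_pos hreg hj).le
  · exact le_csSup (deltaSetE_bddAbove hreg hn hT j hj) (theta_mem_deltaSetE hreg hn hT j hj)

end
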